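/- arXiv:1906.03777 — 3 statements merged into one kernel-verified Lean document; each statement's English description precedes it below -/
import Mathlib

section
/- Let P, A, B be real numbers with P > 0, B > 0 and 0 < A^2 < P·B, and set Δ = A^2/(P·B). Consider J(θ, a) = θ·(B − 2aA + a^2 P) − θB/(1 − 2θ a^2 P) + (1/2)·log(1 − 2θ a^2 P), defined for θ < 0 and a ∈ ℝ (note 1 − 2θ a^2 P > 0 automatically when θ < 0). Then sup_{θ < 0, a ∈ ℝ} J(θ, a) = (1/2)·log(1/(1 − Δ)), and the supremum is attained at a = A/P and θ = −(P/2)/(P·B − A^2). -/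
open Real

/-- The supremum of the GMI objective
`J(θ, a) = θ·(B − 2aA + a²P) − θB/(1 − 2θa²P) + (1/2)·log(1 − 2θa²P)` over `θ < 0` and
`a ∈ ℝ` equals `(1/2)·log(1/(1 − Δ))` with `Δ = A²/(P·B)`, and is attained at
`a = A/P`, `θ = −(P/2)/(P·B − A²)`. -/
theorem stmt0 (P A B : ℝ) (hP : 0 < P) (hB : 0 < B) (hA : 0 < A ^ 2) (hAB : A ^ 2 < P * B) :
    IsGreatest
      {x : ℝ | ∃ θ a : ℝ, θ < 0 ∧
        x = θ * (B - 2 * a * A + a ^ 2 * P) - θ * B / (1 - 2 * θ * a ^ 2 * P)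
          + (1 / 2) * Real.log (1 - 2 * θ * a ^ 2 * P)}
      ((1 / 2) * Real.log (1 / (1 - A ^ 2 / (P * B)))) ∧
    (-(P / 2) / (P * B - A ^ 2)) * (B - 2 * (A / P) * A + (A / P) ^ 2 * P)
        - (-(P / 2) / (P * B - A ^ 2)) * B
            / (1 - 2 * (-(P / 2) / (P * B - A ^ 2)) * (A / P) ^ 2 * P)
        + (1 / 2) * Real.log (1 - 2 * (-(P / 2) / (P * B - A ^ 2)) * (A / P) ^ 2 * P)
      = (1 / 2) * Real.log (1 / (1 - A ^ 2 / (P * B))) := by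
  have hD : 0 < P * B - A ^ 2 := by linarith
  have hPB : 0 < P * B := by positivity
  have hceq : 1 / (1 - A ^ 2 / (P * B)) = P * B / (P * B - A ^ 2) := by
    rw [eq_div_iff (by positivity)]
    field_simp
  set c : ℝ := P * B / (P * B - A ^ 2) with hc
  have hc1 : 1 < c := by
    rw [hc, lt_div_iff₀ hD]; linarith
  have hc0 : 0 < c := by linarith
  -- the value at the claimed optimizer
  have hattain :
      (-(P / 2) / (P * B - A ^ 2)) * (B - 2 * (A / P) * A + (A / P) ^ 2 * P)
        - (-(P / 2) / (P * B - A ^ 2)) * B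
            / (1 - 2 * (-(P / 2) / (P * B - A ^ 2)) * (A / P) ^ 2 * P)
        + (1 / 2) * Real.log (1 - 2 * (-(P / 2) / (P * B - A ^ 2)) * (A / P) ^ 2 * P)
      = (1 / 2) * Real.log (1 / (1 - A ^ 2 / (P * B))) := by
    have h1 : 1 - 2 * (-(P / 2) / (P * B - A ^ 2)) * (A / P) ^ 2 * P
        = P * B / (P * B - A ^ 2) := by
      field_simp
      ring
    rw [h1, hceq]
    have h2 : (-(P / 2) / (P * B - A ^ 2)) * (B - 2 * (A / P) * A + (A / P) ^ 2 * P)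
        - (-(P / 2) / (P * B - A ^ 2)) * B / (P * B / (P * B - A ^ 2)) = 0 := by
      field_simp
      ring
    linarith
  refine ⟨⟨?_, ?_⟩, hattain⟩
  · -- membership: witness θ = -(P/2)/(P*B - A^2), a = A/P
    refine ⟨-(P / 2) / (P * B - A ^ 2), A / P, ?_, hattain.symm⟩
    have : 0 < P / 2 / (P * B - A ^ 2) := by positivity
    rw [neg_div]; linarith
  · -- upper bound
    rintro x ⟨θ, a, hθ, rfl⟩
    rw [hceq]
    set t : ℝ := 1 - 2 * θ * a ^ 2 * P with ht
    have ht1 : 1 ≤ t := by nlinarith [sq_nonneg a, mul_nonneg (sq_nonneg a) hP.le]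
    have ht0 : 0 < t := by linarith
    set Q : ℝ := B - 2 * a * A + a ^ 2 * P with hQ
    -- key algebraic inequality
    have hR : t * (c - t) - 2 * c * θ * (t * Q - B)
        = (A * t + 2 * θ * a * P * B) ^ 2 / (P * B - A ^ 2) := by
      rw [hQ, ht, hc]
      field_simp
      ring
    have hRnn : 0 ≤ t * (c - t) - 2 * c * θ * (t * Q - B) := by
      rw [hR]; positivity
    have key1 : θ * Q - θ * B / t ≤ (c - t) / (2 * c) := by
      rw [← sub_nonneg]
      have heq : (c - t) / (2 * c) - (θ * Q - θ * B / t)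
          = (t * (c - t) - 2 * c * θ * (t * Q - B)) / (2 * c * t) := by
        field_simp
      rw [heq]
      positivity
    have key2 : Real.log t ≤ Real.log c + (t - c) / c := by
      have h := Real.log_le_sub_one_of_pos (show 0 < t / c by positivity)
      rw [Real.log_div (ne_of_gt ht0) (ne_of_gt hc0)] at h
      have : t / c - 1 = (t - c) / c := by field_simp
      linarith [this ▸ h]
    have : (c - t) / (2 * c) + (1 / 2) * ((t - c) / c) = 0 := by
      field_simp
      ring
    nlinarith [key1, key2]
end

section
/- Let P > 0, B > 0, and A be real with A^2 < P·B. Then for every a ≠ 0, sup over γ ≥ 0 of { (1/2)·log(1 + γ) − γ/2 − (γ^2/(1 + γ))·B/(2 a^2 P) + γ·A/(a P) } ≤ (1/2)·log(P·B/(P·B − A^2)), with equality when a = A/P. -/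
/-- for `A² < P·B`, the supremum over `γ ≥ 0` of the scenario-(A) GMI
objective with any scaling parameter `a ≠ 0` is at most `(1/2)·log(P·B/(P·B − A²))`,
with equality when `a = A/P`. -/
theorem stmt8 (P B A : ℝ) (hP : 0 < P) (hB : 0 < B) (hAB : A ^ 2 < P * B) :
    (∀ a : ℝ, a ≠ 0 → ∀ γ : ℝ, 0 ≤ γ →
      (1 / 2) * Real.log (1 + γ) - γ / 2 - (γ ^ 2 / (1 + γ)) * (B / (2 * a ^ 2 * P))
          + γ * (A / (a * P))
        ≤ (1 / 2) * Real.log (P * B / (P * B - A ^ 2))) ∧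
    IsGreatest
      {x : ℝ | ∃ γ : ℝ, 0 ≤ γ ∧
        x = (1 / 2) * Real.log (1 + γ) - γ / 2
            - (γ ^ 2 / (1 + γ)) * (B / (2 * (A / P) ^ 2 * P)) + γ * (A / ((A / P) * P))}
      ((1 / 2) * Real.log (P * B / (P * B - A ^ 2))) := by
  have hPB : 0 < P * B - A ^ 2 := by nlinarith
  have main : ∀ a : ℝ, a ≠ 0 → ∀ γ : ℝ, 0 ≤ γ →
      (1 / 2) * Real.log (1 + γ) - γ / 2 - (γ ^ 2 / (1 + γ)) * (B / (2 * a ^ 2 * P))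
          + γ * (A / (a * P))
        ≤ (1 / 2) * Real.log (P * B / (P * B - A ^ 2)) := by
    intro a ha γ hγ
    have hs : (0:ℝ) < 1 + γ := by linarith
    have hlog : Real.log (1 + γ) - Real.log (P * B / (P * B - A ^ 2)) ≤
        (1 + γ) * ((P * B - A ^ 2) / (P * B)) - 1 := by
      have h1 : Real.log ((1 + γ) * ((P * B - A ^ 2) / (P * B))) ≤
          (1 + γ) * ((P * B - A ^ 2) / (P * B)) - 1 :=
        Real.log_le_sub_one_of_pos (by positivity)
      have h2 : Real.log ((1 + γ) * ((P * B - A ^ 2) / (P * B))) =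
          Real.log (1 + γ) - Real.log (P * B / (P * B - A ^ 2)) := by
        rw [Real.log_mul hs.ne' (by positivity),
            Real.log_div hPB.ne' (by positivity),
            Real.log_div (by positivity) hPB.ne']
        ring
      linarith [h2 ▸ h1]
    have expand : γ / 2 + (γ ^ 2 / (1 + γ)) * (B / (2 * a ^ 2 * P)) - γ * (A / (a * P))
        - ((1 + γ) * ((P * B - A ^ 2) / (P * B)) - 1) / 2
        = (A * a * (1 + γ) - γ * B) ^ 2 / (2 * P * B * a ^ 2 * (1 + γ)) := by
      field_simp
      ring
    have hnn : (0:ℝ) ≤ (A * a * (1 + γ) - γ * B) ^ 2 / (2 * P * B * a ^ 2 * (1 + γ)) := by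
      positivity
    linarith [expand ▸ hnn]
  refine ⟨main, ?_, ?_⟩
  · -- membership
    by_cases hA : A = 0
    · refine ⟨0, le_refl 0, ?_⟩
      subst hA
      simp [div_self (mul_pos hP hB).ne']
    · have ha0 : A / P ≠ 0 := div_ne_zero hA hP.ne'
      refine ⟨A ^ 2 / (P * B - A ^ 2), by positivity, ?_⟩
      have h1 : 1 + A ^ 2 / (P * B - A ^ 2) = P * B / (P * B - A ^ 2) := by
        field_simp
        ring
      rw [h1]
      have h2 : (A ^ 2 / (P * B - A ^ 2)) / 2
          + ((A ^ 2 / (P * B - A ^ 2)) ^ 2 / (P * B / (P * B - A ^ 2)))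
              * (B / (2 * (A / P) ^ 2 * P))
          - (A ^ 2 / (P * B - A ^ 2)) * (A / ((A / P) * P)) = 0 := by
        field_simp
        ring
      linarith [h2]
  · -- upper bound
    rintro x ⟨γ, hγ, rfl⟩
    by_cases hA : A = 0
    · subst hA
      have hs : (0:ℝ) < 1 + γ := by linarith
      have hlog : Real.log (1 + γ) ≤ γ := by
        have := Real.log_le_sub_one_of_pos hs
        linarith
      simp only [zero_div, ne_eq, zero_pow, zero_mul, div_zero, mul_zero, zero_sub]
      norm_num [div_self (mul_pos hP hB).ne']
      linarith
    · exact main (A / P) (div_ne_zero hA hP.ne') γ hγ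
end

section
/- Let P > 0, h ∈ ℝ^p, let X ~ N(0, P) and Z ~ N(0, I_p) be independent, and define Y_i = sgn(h_i·X + Z_i) ∈ {−1, +1} for i = 1, …, p. Let f be the density of N(0, P) and F the standard normal cumulative distribution function. Then Var(E[X | Y]) = Σ_{y ∈ {−1,+1}^p} ( ∫_{−∞}^{∞} u·f(u)·∏_{i=1}^p F(y_i h_i u) du )^2 / ( ∫_{−∞}^{∞} f(u)·∏_{i=1}^p F(y_i h_i u) du ), where the sum is over all y with strictly positive denominator. -/
open MeasureTheory ProbabilityTheory
open scoped ENNReal NNReal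

noncomputable section

namespace Stmt16Aux

lemma variance_congr_ae {Ω : Type*} {m : MeasurableSpace Ω} {μ : Measure Ω} {f g : Ω → ℝ}
    (h : f =ᵐ[μ] g) : variance f μ = variance g μ := by
  unfold variance evariance
  rw [integral_congr_ae h, lintegral_congr_ae (h.mono fun ω hω => by rw [hω])]

lemma pdf01_eq (t : ℝ) :
    gaussianPDFReal 0 1 t = (Real.sqrt (2 * Real.pi))⁻¹ * Real.exp (-(t ^ 2) / 2) := by
  simp [gaussianPDFReal, neg_div]

lemma pdf01_even (t : ℝ) : gaussianPDFReal 0 1 (-t) = gaussianPDFReal 0 1 t := by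
  simp [gaussianPDFReal]

instance : NullSingletonClass (gaussianReal 0 1) :=
  ⟨fun x => (gaussianReal_absolutelyContinuous 0 one_ne_zero) (measure_singleton x)⟩

variable {F : ℝ → ℝ}
  (hF : ∀ u, F u = ∫ t in Set.Iic u, (Real.sqrt (2 * Real.pi))⁻¹ * Real.exp (-(t ^ 2) / 2))

include hF

lemma F_eq_integral (u : ℝ) : F u = ∫ t in Set.Iic u, gaussianPDFReal 0 1 t := by
  rw [hF]; exact setIntegral_congr_fun measurableSet_Iic fun t _ => (pdf01_eq t).symm

lemma meas_Iic (u : ℝ) : gaussianReal 0 1 (Set.Iic u) = ENNReal.ofReal (F u) := by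
  rw [gaussianReal_apply_eq_integral 0 one_ne_zero, F_eq_integral hF]

lemma meas_Iio (u : ℝ) : gaussianReal 0 1 (Set.Iio u) = ENNReal.ofReal (F u) := by
  rw [← meas_Iic hF]
  exact measure_congr (Iio_ae_eq_Iic (μ := gaussianReal 0 1) (a := u))

lemma meas_Ici (a : ℝ) : gaussianReal 0 1 (Set.Ici (-a)) = ENNReal.ofReal (F a) := by
  rw [gaussianReal_apply_eq_integral 0 one_ne_zero, F_eq_integral hF,
    integral_Ici_eq_integral_Ioi, ← integral_comp_neg_Iic]
  exact congrArg _ (setIntegral_congr_fun measurableSet_Iic fun t _ => pdf01_even t)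

lemma F_nonneg (u : ℝ) : 0 ≤ F u := by
  rw [F_eq_integral hF]
  exact setIntegral_nonneg measurableSet_Iic fun t _ => gaussianPDFReal_nonneg 0 1 t

lemma F_le_one (u : ℝ) : F u ≤ 1 := by
  have h1 : ENNReal.ofReal (F u) ≤ 1 := by
    rw [← meas_Iic hF]; exact prob_le_one
  rwa [ENNReal.ofReal_le_one] at h1

lemma F_mono : Monotone F := by
  intro a b hab
  have := measure_mono (μ := gaussianReal 0 1) (Set.Iic_subset_Iic.2 hab)
  rw [meas_Iic hF, meas_Iic hF] at this
  exact (ENNReal.ofReal_le_ofReal_iff (F_nonneg hF b)).1 this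

lemma F_measurable : Measurable F := (F_mono hF).measurable


section P
omit hF
variable {P : ℝ} (hP : 0 < P) {f : ℝ → ℝ}
  (hf : ∀ u, f u = (Real.sqrt (2 * Real.pi * P))⁻¹ * Real.exp (-(u ^ 2) / (2 * P)))

include hP hf

lemma f_eq : f = gaussianPDFReal 0 ⟨P, hP.le⟩ := by
  funext u; rw [hf]; change _ = (Real.sqrt (2 * Real.pi * P))⁻¹ * Real.exp (-(u - 0) ^ 2 / (2 * P)); simp

lemma f_nonneg (u : ℝ) : 0 ≤ f u := (f_eq hP hf) ▸ gaussianPDFReal_nonneg 0 _ u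

lemma f_measurable : Measurable f := (f_eq hP hf) ▸ measurable_gaussianPDFReal 0 _

lemma gamma_eq :
    gaussianReal 0 ⟨P, hP.le⟩
      = volume.withDensity (fun x => ((f x).toNNReal : ℝ≥0∞)) := by
  have hv : (⟨P, hP.le⟩ : NNReal) ≠ 0 := by
    intro hc
    have hc := congrArg NNReal.toReal hc
    exact hP.ne' hc
  rw [gaussianReal_of_var_ne_zero 0 hv]
  congr 1
  funext x
  exact congrArg ENNReal.ofReal (congrFun (f_eq hP hf) x).symm

lemma integral_gamma (g : ℝ → ℝ) :
    ∫ x, g x ∂(gaussianReal 0 ⟨P, hP.le⟩) = ∫ x, f x * g x := by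
  rw [gamma_eq hP hf, integral_withDensity_eq_integral_smul
    ((f_measurable hP hf).real_toNNReal) g]
  refine integral_congr_ae (Filter.Eventually.of_forall fun x => ?_)
  dsimp only
  simp [NNReal.smul_def, Real.coe_toNNReal _ (f_nonneg hP hf x)]

lemma integrable_mul_f (g : ℝ → ℝ) (hg : Integrable (fun x => g x * f x) volume) :
    Integrable g (gaussianReal 0 ⟨P, hP.le⟩) := by
  rw [gamma_eq hP hf, integrable_withDensity_iff ((f_measurable hP hf).real_toNNReal.coe_nnreal_ennreal)
    (Filter.Eventually.of_forall fun x => ENNReal.coe_lt_top)]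
  refine hg.congr (Filter.Eventually.of_forall fun x => ?_)
  dsimp only
  simp [Real.coe_toNNReal _ (f_nonneg hP hf x)]

lemma integrable_id_mul_f : Integrable (fun x : ℝ => x * f x) volume := by
  have hb : (0:ℝ) < (2*P)⁻¹ := by positivity
  have := (integrable_mul_exp_neg_mul_sq hb).const_mul (Real.sqrt (2 * Real.pi * P))⁻¹
  refine this.congr (Filter.Eventually.of_forall fun x => ?_)
  dsimp only
  rw [hf]
  rw [neg_div, div_eq_mul_inv, mul_comm (x^2)]
  ring

lemma integrable_id_gamma : Integrable (fun x : ℝ => x) (gaussianReal 0 ⟨P, hP.le⟩) :=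
  integrable_mul_f hP hf _ (integrable_id_mul_f hP hf)

omit hP in lemma f_even (x : ℝ) : f (-x) = f x := by rw [hf, hf]; ring_nf

lemma integral_id_gamma : ∫ x, x ∂(gaussianReal 0 ⟨P, hP.le⟩) = 0 := by
  rw [integral_gamma hP hf]
  have h1 : ∫ x : ℝ, f x * x = ∫ x : ℝ, f (-x) * (-x) := by
    rw [integral_neg_eq_self (fun x : ℝ => f x * x) volume]
  have h2 : ∫ x : ℝ, f (-x) * (-x) = - ∫ x : ℝ, f x * x := by
    rw [← integral_neg]
    refine integral_congr_ae (Filter.Eventually.of_forall fun x => ?_)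
    dsimp only
    rw [f_even hf]; ring
  linarith [h1, h2]

end P

end Stmt16Aux

/-- appendix: variance of the MMSE estimator for the real SIMO channel
with one-bit quantization `Y_i = sgn(h_i X + Z_i)`:
`Var(E[X|Y]) = Σ_{y ∈ {−1,+1}^p} (∫ u·f(u)·∏ F(yᵢhᵢu) du)²/(∫ f(u)·∏ F(yᵢhᵢu) du)`,
the sum ranging over all `y` with strictly positive denominator. -/
theorem stmt16 {Ω : Type*} {mΩ : MeasurableSpace Ω} (μ : Measure Ω) [IsProbabilityMeasure μ]
    {p : ℕ} (h : Fin p → ℝ) (P : ℝ) (hP : 0 < P)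
    (X : Ω → ℝ) (Z : Ω → Fin p → ℝ)
    (hXm : Measurable X) (hZm : Measurable Z)
    (hXZ : IndepFun X Z μ)
    (hX : Measure.map X μ = gaussianReal 0 ⟨P, hP.le⟩)
    (hZ : Measure.map Z μ = Measure.pi fun _ : Fin p => gaussianReal 0 1)
    (sgn : ℝ → ℝ) (hsgn : ∀ t, sgn t = if 0 ≤ t then 1 else -1)
    (Y : Ω → Fin p → ℝ) (hY : ∀ ω i, Y ω i = sgn (h i * X ω + Z ω i))
    (f F : ℝ → ℝ)
    (hf : ∀ u, f u = (Real.sqrt (2 * Real.pi * P))⁻¹ * Real.exp (-(u ^ 2) / (2 * P)))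
    (hF : ∀ u, F u = ∫ t in Set.Iic u, (Real.sqrt (2 * Real.pi))⁻¹ * Real.exp (-(t ^ 2) / 2)) :
    variance (μ[X|MeasurableSpace.comap Y inferInstance]) μ
      = ∑ s ∈ Finset.univ.filter
          (fun s : Fin p → Bool =>
            0 < ∫ u, f u * ∏ i, F ((if s i then 1 else -1) * h i * u)),
          (∫ u, u * f u * ∏ i, F ((if s i then 1 else -1) * h i * u)) ^ 2
            / ∫ u, f u * ∏ i, F ((if s i then 1 else -1) * h i * u) := by
  classical
  -- notation
  set γ : Measure ℝ := gaussianReal 0 ⟨P, hP.le⟩ with hγdef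
  haveI : IsProbabilityMeasure γ := instIsProbabilityMeasureGaussianReal 0 _
  set ν : Measure ℝ := gaussianReal 0 1 with hνdef
  set ζ : Measure (Fin p → ℝ) := Measure.pi fun _ : Fin p => gaussianReal 0 1 with hζdef
  set G : (Fin p → Bool) → ℝ → ℝ :=
    fun s u => ∏ i, F ((if s i then 1 else -1) * h i * u) with hGdef
  set C : (Fin p → Bool) → Fin p → ℝ → Set ℝ :=
    fun s i u => if s i then Set.Ici (-(h i * u)) else Set.Iio (-(h i * u)) with hCdef
  set W : Ω → Fin p → Bool := fun ω i => decide (0 ≤ h i * X ω + Z ω i) with hWdef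
  set A : (Fin p → Bool) → Set Ω := fun s => W ⁻¹' {s} with hAdef
  set B : (Fin p → Bool) → Set (ℝ × (Fin p → ℝ)) := fun s => {q | ∀ i, q.2 i ∈ C s i q.1}
    with hBdef
  set T : Ω → ℝ × (Fin p → ℝ) := fun ω => (X ω, Z ω) with hTdef
  -- basic measurability
  have hT : Measurable T := hXm.prodMk hZm
  have hsgnm : Measurable sgn := by
    rw [show sgn = fun t => if 0 ≤ t then (1:ℝ) else -1 from funext hsgn]
    exact Measurable.ite measurableSet_Ici measurable_const measurable_const
  have hYmeas : Measurable Y := by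
    rw [show Y = fun ω i => sgn (h i * X ω + Z ω i) from funext fun ω => funext (hY ω)]
    exact measurable_pi_lambda _ fun i =>
      hsgnm.comp ((hXm.const_mul (h i)).add ((measurable_pi_apply i).comp hZm))
  have hm : MeasurableSpace.comap Y inferInstance ≤ mΩ := hYmeas.comap_le
  haveI : SigmaFinite (μ.trim hm) := by infer_instance
  -- map of the pair
  have hmap : Measure.map T μ = γ.prod ζ := by
    rw [← hX, ← hZ]
    exact (indepFun_iff_map_prod_eq_prod_map_map hXm.aemeasurable hZm.aemeasurable).1 hXZ
  -- measurability of B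
  have hBmeas : ∀ s, MeasurableSet (B s) := by
    intro s
    have : B s = ⋂ i, {q : ℝ × (Fin p → ℝ) | q.2 i ∈ C s i q.1} := by
      ext q; simp [hBdef, Set.mem_iInter]
    rw [this]
    refine MeasurableSet.iInter fun i => ?_
    by_cases hsi : s i
    · have : {q : ℝ × (Fin p → ℝ) | q.2 i ∈ C s i q.1}
          = {q : ℝ × (Fin p → ℝ) | -(h i * q.1) ≤ q.2 i} := by
        ext q; simp [hCdef, hsi, Set.mem_Ici]
      rw [this]
      exact measurableSet_le ((measurable_fst.const_mul (h i)).neg)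
        (measurable_snd.eval)
    · have : {q : ℝ × (Fin p → ℝ) | q.2 i ∈ C s i q.1}
          = {q : ℝ × (Fin p → ℝ) | q.2 i < -(h i * q.1)} := by
        ext q; simp [hCdef, hsi, Set.mem_Iio]
      rw [this]
      exact measurableSet_lt (measurable_snd.eval)
        ((measurable_fst.const_mul (h i)).neg)
  -- A s as preimage of B s under T
  have hApre : ∀ s, A s = T ⁻¹' B s := by
    intro s
    ext ω
    simp only [hAdef, Set.mem_preimage, Set.mem_singleton_iff, funext_iff, hBdef,
      Set.mem_setOf_eq, hTdef, hWdef]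
    refine forall_congr' fun i => ?_
    cases hsi : s i
    · simp only [hCdef, hsi, Bool.false_eq_true, if_false, Set.mem_Iio,
        decide_eq_false_iff_not, not_le]
      constructor <;> intro h' <;> linarith
    · simp only [hCdef, hsi, if_true, Set.mem_Ici, decide_eq_true_eq]
      constructor <;> intro h' <;> linarith
  have hAmeas : ∀ s, MeasurableSet (A s) := fun s => (hApre s) ▸ hT (hBmeas s)
  -- slice of B
  have hslice : ∀ s (u : ℝ), Prod.mk u ⁻¹' B s = Set.univ.pi (fun i => C s i u) := by
    intro s u; ext z; simp [hBdef, Set.mem_pi]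
  -- one-dimensional measures
  have hνC : ∀ s (i : Fin p) (u : ℝ),
      ν (C s i u) = ENNReal.ofReal (F ((if s i then 1 else -1) * h i * u)) := by
    intro s i u
    cases hsi : s i
    · simp only [hCdef, hsi, Bool.false_eq_true, if_false]
      rw [show (-1 : ℝ) * h i * u = -(h i * u) by ring]
      exact Stmt16Aux.meas_Iio hF (-(h i * u))
    · simp only [hCdef, hsi, if_true, one_mul]
      exact Stmt16Aux.meas_Ici hF (h i * u)
  have hζB : ∀ s (u : ℝ), ζ (Prod.mk u ⁻¹' B s) = ENNReal.ofReal (G s u) := by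
    intro s u
    rw [hslice s u, hζdef, Measure.pi_pi]
    rw [hGdef]
    rw [ENNReal.ofReal_prod_of_nonneg fun i _ => Stmt16Aux.F_nonneg hF _]
    exact Finset.prod_congr rfl fun i _ => hνC s i u
  -- properties of G
  have hGnn : ∀ s u, 0 ≤ G s u := fun s u =>
    Finset.prod_nonneg fun i _ => Stmt16Aux.F_nonneg hF _
  have hGle1 : ∀ s u, G s u ≤ 1 := fun s u =>
    Finset.prod_le_one (fun i _ => Stmt16Aux.F_nonneg hF _) fun i _ => Stmt16Aux.F_le_one hF _
  have hGmeas : ∀ s, Measurable (G s) := by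
    intro s
    rw [hGdef]
    exact Finset.measurable_prod _ fun i _ =>
      (Stmt16Aux.F_measurable hF).comp (measurable_id.const_mul _)
  have hGint : ∀ s, Integrable (G s) γ := by
    intro s
    refine Integrable.mono' (integrable_const 1) (hGmeas s).aestronglyMeasurable
      (Filter.Eventually.of_forall fun u => ?_)
    rw [Real.norm_eq_abs, abs_of_nonneg (hGnn s u)]
    exact hGle1 s u
  have hCmeas : ∀ s (i : Fin p) (u : ℝ), MeasurableSet (C s i u) := by
    intro s i u
    cases hsi : s i
    · simp only [hCdef, hsi, Bool.false_eq_true, if_false]; exact measurableSet_Iio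
    · simp only [hCdef, hsi, if_true]; exact measurableSet_Ici
  -- measure of the atoms
  have hmeasA : ∀ s, μ (A s) = ENNReal.ofReal (∫ u, f u * G s u) := by
    intro s
    rw [hApre s, ← Measure.map_apply hT (hBmeas s), hmap, Measure.prod_apply (hBmeas s),
      lintegral_congr (hζB s),
      ← ofReal_integral_eq_lintegral_ofReal (hGint s) (Filter.Eventually.of_forall (hGnn s)),
      hγdef, Stmt16Aux.integral_gamma hP hf]
  have hμAne : ∀ s, μ (A s) ≠ ⊤ := fun s => measure_ne_top μ _
  have hqdef : ∀ s, (μ (A s)).toReal = ∫ u, f u * G s u := by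
    intro s
    rw [hmeasA s, ENNReal.toReal_ofReal
      (integral_nonneg fun u => mul_nonneg (Stmt16Aux.f_nonneg hP hf u) (hGnn s u))]
  -- integrability of X
  have hXint : Integrable X μ := by
    have h1 : Integrable (fun x : ℝ => x) (Measure.map X μ) := by
      rw [hX, hγdef]
      exact Stmt16Aux.integrable_id_gamma hP hf
    exact (integrable_map_measure measurable_id.aestronglyMeasurable hXm.aemeasurable).1 h1
  have hEX : ∫ ω, X ω ∂μ = 0 := by
    have h1 : ∫ ω, X ω ∂μ = ∫ x, x ∂(Measure.map X μ) :=
      (integral_map hXm.aemeasurable measurable_id.aestronglyMeasurable).symm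
    rw [h1, hX, hγdef, Stmt16Aux.integral_id_gamma hP hf]
  have hfstint : Integrable (fun q : ℝ × (Fin p → ℝ) => q.1) (γ.prod ζ) := by
    have h1 : Integrable (fun x : ℝ => x) (Measure.map Prod.fst (γ.prod ζ)) := by
      rw [Measure.map_fst_prod]
      simp only [measure_univ, one_smul]
      rw [hγdef]
      exact Stmt16Aux.integrable_id_gamma hP hf
    exact (integrable_map_measure measurable_id.aestronglyMeasurable
      measurable_fst.aemeasurable).1 h1
  -- set integral of X over the atoms
  have hintA : ∀ s, ∫ ω in A s, X ω ∂μ = ∫ u, u * f u * G s u := by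
    intro s
    have h1 : ∫ ω in A s, X ω ∂μ = ∫ q in B s, q.1 ∂(γ.prod ζ) := by
      rw [← hmap, setIntegral_map (hBmeas s) measurable_fst.aestronglyMeasurable
        hT.aemeasurable, hApre s]
    rw [h1, ← integral_indicator (hBmeas s),
      integral_prod _ (hfstint.indicator (hBmeas s))]
    have h3 : ∀ u : ℝ, (∫ z, (B s).indicator (fun q : ℝ × (Fin p → ℝ) => q.1) (u, z) ∂ζ)
        = G s u * u := by
      intro u
      have h4 : (fun z => (B s).indicator (fun q : ℝ × (Fin p → ℝ) => q.1) (u, z))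
          = (Set.univ.pi fun i => C s i u).indicator (fun _ => u) := by
        funext z
        by_cases hz : (u, z) ∈ B s
        · rw [Set.indicator_of_mem hz, Set.indicator_of_mem (by rw [← hslice s u]; exact hz)]
        · rw [Set.indicator_of_notMem hz,
            Set.indicator_of_notMem (by rw [← hslice s u]; exact hz)]
      rw [h4, integral_indicator_const u (MeasurableSet.univ_pi fun i => hCmeas s i u),
        ← hslice s u, measureReal_def, hζB s u, ENNReal.toReal_ofReal (hGnn s u), smul_eq_mul]
    rw [integral_congr_ae (Filter.Eventually.of_forall h3), hγdef,
      Stmt16Aux.integral_gamma hP hf]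
    refine integral_congr_ae (Filter.Eventually.of_forall fun u => ?_)
    dsimp only
    ring
  -- the partition
  have hYω : ∀ ω, Y ω = fun i => if W ω i then (1:ℝ) else -1 := by
    intro ω; funext i; rw [hY, hsgn, hWdef]
    by_cases h0 : 0 ≤ h i * X ω + Z ω i <;> simp [h0]
  have hpair : Pairwise (Function.onFun Disjoint A) := by
    intro s t hst
    simp only [Function.onFun, hAdef]
    refine Set.disjoint_left.2 fun ω hs ht => hst ?_
    rw [Set.mem_preimage, Set.mem_singleton_iff] at hs ht
    rw [← hs, ← ht]
  have hcover : (⋃ s ∈ (Finset.univ : Finset (Fin p → Bool)), A s) = Set.univ := by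
    ext ω
    simp only [Set.mem_iUnion, Set.mem_univ, iff_true, hAdef, Set.mem_preimage,
      Set.mem_singleton_iff]
    exact ⟨W ω, Finset.mem_univ _, rfl⟩
  -- the candidate conditional expectation
  set c : (Fin p → Bool) → ℝ := fun s => (∫ ω in A s, X ω ∂μ) / (μ (A s)).toReal with hcdef
  set g0 : Ω → ℝ := fun ω => c (W ω) with hg0def
  have hWY : ∀ ω, (fun i => decide (Y ω i = 1)) = W ω := by
    intro ω; funext i
    rw [hYω ω]
    by_cases hw : W ω i
    · simp [hw]
    · simp only [hw, Bool.false_eq_true, if_false]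
      rw [decide_eq_false_iff_not]
      · norm_num
  have hg0m : Measurable[MeasurableSpace.comap Y inferInstance] g0 := by
    have hψ : Measurable fun y : Fin p → ℝ => (fun i => decide (y i = 1)) := by
      refine measurable_pi_lambda _ fun i => measurable_to_bool ?_
      have he : (fun y : Fin p → ℝ => decide (y i = 1)) ⁻¹' {true}
          = (fun y : Fin p → ℝ => y i) ⁻¹' {1} := by
        ext y; simp
      rw [he]
      exact measurable_pi_apply i (measurableSet_singleton 1)
    have hcm : Measurable (fun y : Fin p → ℝ => c (fun i => decide (y i = 1))) :=
      (measurable_of_countable c).comp hψ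
    have hco : g0 = (fun y : Fin p → ℝ => c (fun i => decide (y i = 1))) ∘ Y := by
      funext ω
      simp only [Function.comp_apply, hg0def]
      rw [hWY ω]
    rw [hco]
    exact hcm.comp (measurable_iff_comap_le.2 le_rfl)
  have hg0sm : StronglyMeasurable[MeasurableSpace.comap Y inferInstance] g0 :=
    hg0m.stronglyMeasurable
  have hg0meas : Measurable g0 := hg0m.mono hm le_rfl
  have hg0L2 : MemLp g0 2 μ := by
    refine MemLp.of_bound hg0meas.aestronglyMeasurable (∑ s, |c s|)
      (Filter.Eventually.of_forall fun ω => ?_)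
    simp only [hg0def, Real.norm_eq_abs]
    exact Finset.single_le_sum (f := fun s => |c s|) (fun s _ => abs_nonneg _)
      (Finset.mem_univ (W ω))
  have hg0int : Integrable g0 μ := hg0L2.integrable one_le_two
  have hconst : ∀ s, ∀ ω ∈ A s, g0 ω = c s := by
    intro s ω hω
    have hws : W ω = s := hω
    simp only [hg0def]
    rw [hws]
  have hAg0 : ∀ s, ∫ ω in A s, g0 ω ∂μ = (μ (A s)).toReal * c s := by
    intro s
    rw [setIntegral_congr_fun (hAmeas s) (hconst s), setIntegral_const, smul_eq_mul, measureReal_def]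
  have hzero : ∀ s, μ (A s) = 0 → ∫ ω in A s, X ω ∂μ = 0 := by
    intro s hs
    rw [Measure.restrict_eq_zero.2 hs, integral_zero_measure]
  have hAeq : ∀ s, ∫ ω in A s, g0 ω ∂μ = ∫ ω in A s, X ω ∂μ := by
    intro s
    rw [hAg0 s]
    by_cases hs : μ (A s) = 0
    · rw [hzero s hs, hs]; simp
    · simp only [hcdef]
      rw [mul_comm, div_mul_cancel₀ _ (ENNReal.toReal_ne_zero.2 ⟨hs, hμAne s⟩)]
  -- g0 is a version of the conditional expectation
  have hgeq : g0 =ᵐ[μ] μ[X|MeasurableSpace.comap Y inferInstance] := by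
    refine ae_eq_condExp_of_forall_setIntegral_eq hm hXint
      (fun t ht hμt => hg0int.integrableOn) (fun t ht hμt => ?_)
      ⟨g0, hg0sm, Filter.EventuallyEq.rfl⟩
    obtain ⟨Bs, hBs, rfl⟩ := ht
    have hdecomp : Y ⁻¹' Bs = ⋃ s ∈ Finset.univ.filter
        (fun s : Fin p → Bool => (fun i => if s i then (1:ℝ) else -1) ∈ Bs), A s := by
      ext ω
      simp only [Set.mem_preimage, Set.mem_iUnion, Finset.mem_filter, Finset.mem_univ,
        true_and, hAdef, Set.mem_singleton_iff]
      constructor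
      · intro hmem
        exact ⟨W ω, by rw [← hYω ω]; exact hmem, rfl⟩
      · rintro ⟨s, hs, hws⟩
        rw [hYω ω, hws]
        exact hs
    rw [hdecomp, integral_biUnion_finset _ (fun s _ => hAmeas s)
      (hpair.set_pairwise _) (fun s _ => hg0int.integrableOn),
      integral_biUnion_finset _ (fun s _ => hAmeas s)
      (hpair.set_pairwise _) (fun s _ => hXint.integrableOn)]
    exact Finset.sum_congr rfl fun s _ => hAeq s
  -- compute the variance
  have hvar : variance (μ[X|MeasurableSpace.comap Y inferInstance]) μ = variance g0 μ :=
    (Stmt16Aux.variance_congr_ae hgeq).symm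
  have hEg0 : ∫ ω, g0 ω ∂μ = 0 := by
    rw [integral_congr_ae hgeq, integral_condExp hm, hEX]
  have hEg02 : ∫ ω, (g0 ^ 2) ω ∂μ = ∑ s, (μ (A s)).toReal * (c s) ^ 2 := by
    have hsq : Integrable (fun ω => g0 ω ^ 2) μ := hg0L2.integrable_sq
    have h5 : ∫ ω, (g0 ^ 2) ω ∂μ
        = ∫ ω in ⋃ s ∈ (Finset.univ : Finset (Fin p → Bool)), A s, g0 ω ^ 2 ∂μ := by
      rw [hcover, setIntegral_univ]
      simp only [Pi.pow_apply]
    rw [h5, integral_biUnion_finset _ (fun s _ => hAmeas s) (hpair.set_pairwise _)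
      (fun s _ => hsq.integrableOn)]
    refine Finset.sum_congr rfl fun s _ => ?_
    rw [setIntegral_congr_fun (hAmeas s) (fun ω hω => by rw [hconst s ω hω]),
      setIntegral_const, smul_eq_mul, measureReal_def]
  have hterm : ∀ s, (μ (A s)).toReal * (c s) ^ 2
      = (∫ u, u * f u * G s u) ^ 2 / (∫ u, f u * G s u) := by
    intro s
    rw [← hintA s, ← hqdef s]
    simp only [hcdef]
    by_cases hq : (μ (A s)).toReal = 0
    · have h0 : μ (A s) = 0 := by
        rcases (ENNReal.toReal_eq_zero_iff _).1 hq with h0 | h0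
        · exact h0
        · exact absurd h0 (hμAne s)
      rw [hq, hzero s h0]
      simp
    · rw [div_pow]
      field_simp
  have hnum0 : ∀ s, ¬ (0 < ∫ u, f u * G s u) → (∫ u, u * f u * G s u) ^ 2
      / (∫ u, f u * G s u) = 0 := by
    intro s hns
    have hle : (0:ℝ) ≤ ∫ u, f u * G s u :=
      integral_nonneg fun u => mul_nonneg (Stmt16Aux.f_nonneg hP hf u) (hGnn s u)
    have heq0 : (∫ u, f u * G s u) = 0 := le_antisymm (not_lt.1 hns) hle
    have hq0 : (μ (A s)).toReal = 0 := by rw [hqdef s, heq0]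
    have h0 : μ (A s) = 0 := by
      rcases (ENNReal.toReal_eq_zero_iff _).1 hq0 with h0 | h0
      · exact h0
      · exact absurd h0 (hμAne s)
    rw [← hintA s, hzero s h0, heq0]
    simp
  have hfilter : ∑ s ∈ Finset.univ.filter
        (fun s : Fin p → Bool => 0 < ∫ u, f u * G s u),
        (∫ u, u * f u * G s u) ^ 2 / (∫ u, f u * G s u)
      = ∑ s : Fin p → Bool, (∫ u, u * f u * G s u) ^ 2 / (∫ u, f u * G s u) :=
    Finset.sum_filter_of_ne fun s _ hne => by
      by_contra hns
      exact hne (hnum0 s hns)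
  have hmain : variance (μ[X|MeasurableSpace.comap Y inferInstance]) μ
      = ∑ s ∈ Finset.univ.filter
          (fun s : Fin p → Bool => 0 < ∫ u, f u * G s u),
          (∫ u, u * f u * G s u) ^ 2 / (∫ u, f u * G s u) := by
    rw [hvar, variance_eq_sub hg0L2, hEg0, hEg02, hfilter]
    rw [Finset.sum_congr rfl fun s _ => hterm s]
    norm_num
  simp only [hGdef] at hmain
  exact hmain
end
end
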